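/- arXiv:2406.17152 — 2 statements merged into one kernel-verified Lean document; each statement's English description precedes it below -/
import Mathlib

section
/- (Klainerman–Sobolev type inequality) For t > 0 and any Schwartz function u: ℝ → ℂ (with the time t fixed), ‖u‖_{L^∞}² ≤ C · t⁻¹ · ‖u‖_{L²} · ‖Lu‖_{L²}, where Lu = xu + 2it u' and C is a universal constant. -/
open Complex MeasureTheory Filter

/-- Klainerman–Sobolev type inequality: for `t > 0` and Schwartz `u`,
`‖u‖_{L^∞}² ≤ C t⁻¹ ‖u‖_{L²} ‖Lu‖_{L²}` with `Lu = xu + 2it u'`. -/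
theorem klainerman_sobolev :
    ∃ C : ℝ, 0 < C ∧ ∀ (t : ℝ), 0 < t → ∀ u : SchwartzMap ℝ ℂ, ∀ x : ℝ,
      ‖u x‖ ^ 2 ≤ C * t⁻¹ *
        (∫ y : ℝ, ‖u y‖ ^ 2) ^ ((1 : ℝ) / 2) *
        (∫ y : ℝ, ‖(y : ℂ) * u y + 2 * I * (t : ℂ) * deriv u y‖ ^ 2) ^ ((1 : ℝ) / 2) := by
  refine ⟨1, one_pos, fun t ht u x => ?_⟩
  have ht' : (t : ℝ) ≠ 0 := ne_of_gt ht
  -- the Schwartz map `y ↦ y * u y + 2 i t * u' y`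
  set g : SchwartzMap ℝ ℂ :=
    SchwartzMap.bilinLeftCLM (ContinuousLinearMap.mul ℝ ℂ)
      (Complex.ofRealCLM.hasTemperateGrowth) u + (2 * I * (t : ℂ)) • SchwartzMap.derivCLM ℝ ℂ u
    with hgdef
  have hg : ∀ y : ℝ, g y = (y : ℂ) * u y + 2 * I * (t : ℂ) * deriv u y := by
    intro y
    show u y * (y : ℂ) + (2 * I * (t : ℂ)) • (SchwartzMap.derivCLM ℝ ℂ u) y = _
    rw [SchwartzMap.derivCLM_apply, smul_eq_mul, mul_comm (u y)]
  -- boundedness of u and g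
  obtain ⟨M, hM⟩ : ∃ M : ℝ, ∀ y : ℝ, ‖u y‖ ≤ M :=
    ⟨‖u.toBoundedContinuousFunction‖, fun y =>
      u.toBoundedContinuousFunction.norm_coe_le_norm y⟩
  obtain ⟨N, hN⟩ : ∃ N : ℝ, ∀ y : ℝ, ‖g y‖ ≤ N :=
    ⟨‖g.toBoundedContinuousFunction‖, fun y =>
      g.toBoundedContinuousFunction.norm_coe_le_norm y⟩
  -- integrability facts
  have hu2 : Integrable (fun y : ℝ => ‖u y‖ ^ 2) := by
    refine Integrable.mono' (u.integrable.norm.const_mul M)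
      (u.continuous.norm.pow 2).aestronglyMeasurable
      (Filter.Eventually.of_forall fun y => ?_)
    rw [Real.norm_of_nonneg (by positivity), sq]
    exact mul_le_mul_of_nonneg_right (hM y) (norm_nonneg _)
  have hg2 : Integrable (fun y : ℝ => ‖g y‖ ^ 2) := by
    refine Integrable.mono' (g.integrable.norm.const_mul N)
      (g.continuous.norm.pow 2).aestronglyMeasurable
      (Filter.Eventually.of_forall fun y => ?_)
    rw [Real.norm_of_nonneg (by positivity), sq]
    exact mul_le_mul_of_nonneg_right (hN y) (norm_nonneg _)
  have hug : Integrable (fun y : ℝ => ‖u y‖ * ‖g y‖) := by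
    refine Integrable.mono' (g.integrable.norm.const_mul M)
      (u.continuous.norm.mul g.continuous.norm).aestronglyMeasurable
      (Filter.Eventually.of_forall fun y => ?_)
    rw [Real.norm_of_nonneg (by positivity)]
    exact mul_le_mul_of_nonneg_right (hM y) (norm_nonneg _)
  -- derivative of |u|²
  set F : ℝ → ℝ := fun y => (u y).re * (u y).re + (u y).im * (u y).im with hFdef
  set F' : ℝ → ℝ := fun y => t⁻¹ * ((starRingEnd ℂ) (u y) * g y).im with hF'def
  have hFnorm : ∀ y : ℝ, F y = ‖u y‖ ^ 2 := by
    intro y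
    rw [hFdef]
    simp only
    rw [← Complex.normSq_apply, ← Complex.sq_norm]
  have hderivF : ∀ y : ℝ, HasDerivAt F (F' y) y := by
    intro y
    have hu1 : HasDerivAt u (deriv u y) y := (u.differentiable y).hasDerivAt
    have hre : HasDerivAt (fun z : ℝ => (u z).re) ((deriv u y).re) y :=
      Complex.reCLM.hasFDerivAt.comp_hasDerivAt y hu1
    have him : HasDerivAt (fun z : ℝ => (u z).im) ((deriv u y).im) y :=
      Complex.imCLM.hasFDerivAt.comp_hasDerivAt y hu1
    have h := (hre.mul hre).add (him.mul him)
    refine h.congr_deriv ?_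
    symm
    rw [hF'def]
    simp only [hg y, Complex.mul_im, Complex.add_im, Complex.add_re, Complex.mul_re,
      Complex.conj_re, Complex.conj_im, Complex.ofReal_re, Complex.ofReal_im,
      Complex.I_re, Complex.I_im, Complex.re_ofNat, Complex.im_ofNat]
    field_simp
    ring
  -- pointwise bound on F'
  have hF'bound : ∀ y : ℝ, ‖F' y‖ ≤ t⁻¹ * (‖u y‖ * ‖g y‖) := by
    intro y
    rw [hF'def]
    simp only
    rw [norm_mul, Real.norm_of_nonneg (by positivity : (0:ℝ) ≤ t⁻¹)]
    refine mul_le_mul_of_nonneg_left ?_ (by positivity)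
    calc ‖((starRingEnd ℂ) (u y) * g y).im‖ ≤ ‖(starRingEnd ℂ) (u y) * g y‖ :=
          Complex.abs_im_le_norm _
      _ = ‖u y‖ * ‖g y‖ := by rw [norm_mul, RCLike.norm_conj]
  have hF'int : Integrable F' := by
    refine Integrable.mono' ((hug.const_mul t⁻¹))
      ((Continuous.mul continuous_const
        (Complex.continuous_im.comp
          ((Complex.continuous_conj.comp u.continuous).mul g.continuous))).aestronglyMeasurable)
      (Filter.Eventually.of_forall hF'bound)
  -- limit of F at +∞
  have htend : Tendsto F atTop (nhds 0) := by
    have h0 : Tendsto u atTop (nhds 0) := by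
      have := zero_at_infty u
      refine this.mono_left ?_
      rw [cocompact_eq_atBot_atTop]
      exact le_sup_right
    have hn : Tendsto (fun y => ‖u y‖) atTop (nhds 0) := by
      simpa using h0.norm
    have := (hn.pow 2)
    simp only [ne_eq, OfNat.ofNat_ne_zero, not_false_eq_true, zero_pow] at this
    refine this.congr fun y => (hFnorm y).symm
  -- FTC on (x, ∞)
  have hFTC : ∫ y in Set.Ioi x, F' y = 0 - F x :=
    integral_Ioi_of_hasDerivAt_of_tendsto' (fun y _ => hderivF y)
      hF'int.integrableOn htend
  -- chain of inequalities
  have step1 : F x ≤ ∫ y in Set.Ioi x, ‖F' y‖ := by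
    have : F x = -(∫ y in Set.Ioi x, F' y) := by rw [hFTC]; ring
    rw [this]
    calc -(∫ y in Set.Ioi x, F' y) ≤ |∫ y in Set.Ioi x, F' y| := neg_le_abs _
      _ ≤ ∫ y in Set.Ioi x, ‖F' y‖ := by
          rw [← Real.norm_eq_abs]
          exact norm_integral_le_integral_norm _
  have step2 : (∫ y in Set.Ioi x, ‖F' y‖) ≤ ∫ y : ℝ, t⁻¹ * (‖u y‖ * ‖g y‖) := by
    calc (∫ y in Set.Ioi x, ‖F' y‖) ≤ ∫ y in Set.Ioi x, t⁻¹ * (‖u y‖ * ‖g y‖) := by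
          refine integral_mono_of_nonneg (Filter.Eventually.of_forall fun y => norm_nonneg _)
            ((hug.const_mul t⁻¹).integrableOn) (Filter.Eventually.of_forall fun y => hF'bound y)
      _ ≤ ∫ y : ℝ, t⁻¹ * (‖u y‖ * ‖g y‖) := by
          refine setIntegral_le_integral (hug.const_mul t⁻¹)
            (Filter.Eventually.of_forall fun y => by positivity)
  -- Cauchy-Schwarz
  have rpow_two : ∀ z : ℝ, z ^ (2:ℝ) = z ^ 2 := fun z => by
    rw [show (2:ℝ) = ((2:ℕ):ℝ) by norm_num, Real.rpow_natCast]
  have hCS : (∫ y : ℝ, ‖u y‖ * ‖g y‖) ≤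
      (∫ y : ℝ, ‖u y‖ ^ 2) ^ ((1:ℝ)/2) * (∫ y : ℝ, ‖g y‖ ^ 2) ^ ((1:ℝ)/2) := by
    have hpq : Real.HolderConjugate 2 2 := Real.HolderConjugate.two_two
    have h2 : ENNReal.ofReal (2:ℝ) = 2 := by
      rw [show (2:ℝ) = ((2:ℕ):ℝ) by norm_num, ENNReal.ofReal_natCast]; norm_num
    have hmu : MemLp (fun y : ℝ => ‖u y‖) (ENNReal.ofReal 2) := by
      rw [h2]
      refine (memLp_two_iff_integrable_sq u.continuous.norm.aestronglyMeasurable).mpr ?_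
      exact hu2
    have hmg : MemLp (fun y : ℝ => ‖g y‖) (ENNReal.ofReal 2) := by
      rw [h2]
      refine (memLp_two_iff_integrable_sq g.continuous.norm.aestronglyMeasurable).mpr ?_
      exact hg2
    have := integral_mul_le_Lp_mul_Lq_of_nonneg hpq
      (Filter.Eventually.of_forall fun y => norm_nonneg (u y))
      (Filter.Eventually.of_forall fun y => norm_nonneg (g y)) hmu hmg
    simpa only [rpow_two] using this
  -- assemble
  have hgoal : ‖u x‖ ^ 2 ≤ t⁻¹ *
      ((∫ y : ℝ, ‖u y‖ ^ 2) ^ ((1:ℝ)/2) * (∫ y : ℝ, ‖g y‖ ^ 2) ^ ((1:ℝ)/2)) := by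
    rw [← hFnorm x]
    refine le_trans step1 (le_trans step2 ?_)
    rw [integral_const_mul]
    exact mul_le_mul_of_nonneg_left hCS (by positivity)
  have hrw : (∫ y : ℝ, ‖(y : ℂ) * u y + 2 * I * (t : ℂ) * deriv u y‖ ^ 2) =
      ∫ y : ℝ, ‖g y‖ ^ 2 := by
    refine integral_congr_ae (Filter.Eventually.of_forall fun y => ?_)
    simp only [hg]
  rw [hrw, one_mul]
  linarith [hgoal]
end

section
/- If u solves the linear Schrödinger equation, then the quantity Lu(t) = x u(t) + 2it ∂ₓu(t) has conserved L² norm: ‖Lu(t)‖_{L²} = ‖x u₀‖_{L²} for all t. -/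
open Complex MeasureTheory

open scoped FourierTransform Real RealInnerProductSpace ContDiff

lemma polyBound (p : Polynomial ℂ) : ∃ C : ℝ, ∀ x : ℝ,
    ‖p.eval (x : ℂ)‖ ≤ C * (1 + ‖x‖) ^ p.natDegree := by
  refine ⟨∑ i ∈ Finset.range (p.natDegree + 1), ‖p.coeff i‖, fun x => ?_⟩
  rw [Polynomial.eval_eq_sum_range, Finset.sum_mul]
  refine (norm_sum_le _ _).trans (Finset.sum_le_sum fun i hi => ?_)
  rw [norm_mul, norm_pow]
  have key : ‖(x:ℂ)‖ ^ i ≤ (1 + ‖x‖) ^ p.natDegree := by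
    calc ‖(x:ℂ)‖ ^ i ≤ (1 + ‖x‖) ^ i := by
          apply pow_le_pow_left₀ (norm_nonneg _)
          simp [Complex.norm_real]
      _ ≤ (1 + ‖x‖) ^ p.natDegree := by
          apply pow_le_pow_right₀
          · have := norm_nonneg x; linarith
          · simpa [Nat.lt_succ_iff] using Finset.mem_range.1 hi
  exact mul_le_mul_of_nonneg_left key (norm_nonneg _)

lemma chirp_hasDerivAt (a : ℂ) (y : ℝ) :
    HasDerivAt (fun y : ℝ => Complex.exp (a * (y:ℂ)^2)) (2*a*y*Complex.exp (a*(y:ℂ)^2)) y := by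
  have h1 : HasDerivAt (fun z : ℂ => Complex.exp (a * z^2)) (2*a*(y:ℂ)*Complex.exp (a*(y:ℂ)^2)) (y:ℂ) := by
    have := ((hasDerivAt_pow 2 (y:ℂ)).const_mul a).cexp
    convert this using 1
    · rfl
    norm_num
    ring
  simpa using h1.comp_ofReal


lemma chirp_contDiff (a : ℂ) : ContDiff ℝ ∞ (fun y : ℝ => Complex.exp (a * (y:ℂ)^2)) := by
  apply Complex.contDiff_exp.comp
  exact contDiff_const.mul (Complex.ofRealCLM.contDiff.pow 2)

lemma chirp_iteratedDeriv (a : ℂ) (n : ℕ) : ∃ p : Polynomial ℂ, ∀ y : ℝ,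
    iteratedDeriv n (fun y : ℝ => Complex.exp (a * (y:ℂ)^2)) y
      = p.eval (y:ℂ) * Complex.exp (a * (y:ℂ)^2) := by
  induction n with
  | zero => exact ⟨1, fun y => by simp⟩
  | succ n ih =>
    obtain ⟨p, hp⟩ := ih
    refine ⟨p.derivative + p * (Polynomial.C (2*a) * Polynomial.X), fun y => ?_⟩
    rw [iteratedDeriv_succ]
    have h1 : deriv (iteratedDeriv n (fun y : ℝ => Complex.exp (a * (y:ℂ)^2))) y
        = deriv (fun y : ℝ => p.eval (y:ℂ) * Complex.exp (a * (y:ℂ)^2)) y := by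
      congr 1; ext z; exact hp z
    rw [h1]
    have hpoly : HasDerivAt (fun y : ℝ => p.eval (y:ℂ)) (p.derivative.eval (y:ℂ)) y :=
      (p.hasDerivAt (y:ℂ)).comp_ofReal
    have := hpoly.fun_mul (chirp_hasDerivAt a y)
    rw [this.deriv]
    simp only [Polynomial.eval_add, Polynomial.eval_mul, Polynomial.eval_C, Polynomial.eval_X]
    ring

lemma chirp_temperate {a : ℂ} (ha : a.re = 0) :
    Function.HasTemperateGrowth (fun y : ℝ => Complex.exp (a * (y:ℂ)^2)) := by
  refine ⟨chirp_contDiff a, fun n => ?_⟩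
  obtain ⟨p, hp⟩ := chirp_iteratedDeriv a n
  obtain ⟨C, hC⟩ := polyBound p
  refine ⟨p.natDegree, C, fun y => ?_⟩
  rw [norm_iteratedFDeriv_eq_norm_iteratedDeriv, hp y, norm_mul]
  have hone : ‖Complex.exp (a * (y:ℂ)^2)‖ = 1 := by
    rw [Complex.norm_exp]
    have : (a * (y:ℂ)^2).re = 0 := by
      have h2 : ((y:ℂ)^2) = ((y^2 : ℝ) : ℂ) := by push_cast; ring
      rw [h2, Complex.mul_re, Complex.ofReal_re, Complex.ofReal_im, ha]
      ring
    simp [this]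
  rw [hone, mul_one]
  exact hC y

lemma chirp_norm {a : ℂ} (ha : a.re = 0) (y : ℝ) : ‖Complex.exp (a * (y:ℂ)^2)‖ = 1 := by
  rw [Complex.norm_exp]
  have h2 : ((y:ℂ)^2) = ((y^2 : ℝ) : ℂ) := by push_cast; ring
  have h3 : (a * (y:ℂ)^2).re = 0 := by
    rw [h2, Complex.mul_re, Complex.ofReal_re, Complex.ofReal_im, ha]
    ring
  rw [h3, Real.exp_zero]

lemma conj_integrable {f : ℝ → ℂ} (hf : Integrable f) :
    Integrable (fun x => (starRingEnd ℂ) (f x)) :=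
  Complex.conjCLE.toContinuousLinearMap.integrable_comp hf

lemma fourier_plancherel (g : SchwartzMap ℝ ℂ) :
    ∫ ξ : ℝ, ‖𝓕 (g : ℝ → ℂ) ξ‖ ^ 2 = ∫ x : ℝ, ‖g x‖ ^ 2 := by
  have hG_int : Integrable (𝓕 (g : ℝ → ℂ)) := by
    have := (SchwartzMap.fourierTransformCLM ℂ g).integrable (μ := volume)
    rwa [SchwartzMap.fourierTransformCLM_apply] at this
  set v : ℝ → ℂ := fun y => (starRingEnd ℂ) ((g : ℝ → ℂ) (-y)) with hv
  have hv_int : Integrable v := conj_integrable g.integrable.comp_neg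
  have hFv : 𝓕 v = fun ξ => (starRingEnd ℂ) (𝓕 (g : ℝ → ℂ) ξ) := by
    funext ξ
    rw [Real.fourier_real_eq, Real.fourier_real_eq, ← integral_conj,
      ← integral_neg_eq_self]
    congr 1
    funext y
    simp only [hv, neg_neg, Circle.smul_def, Real.fourierChar_apply, smul_eq_mul, map_mul]
    congr 1
    rw [← Complex.exp_conj]
    congr 1
    simp only [map_mul, Complex.conj_ofReal, Complex.conj_I]
    push_cast
    ring
  have hFv_int : Integrable (𝓕 v) := by rw [hFv]; exact conj_integrable hG_int
  have hinv : ∀ x : ℝ, 𝓕 (𝓕 v) x = (starRingEnd ℂ) ((g : ℝ → ℂ) x) := by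
    intro x
    have hc : ContinuousAt v (-x) :=
      ((Complex.continuous_conj.comp (g.continuous.comp continuous_neg))).continuousAt
    have hiv := hv_int.fourierInv_fourier_eq hFv_int hc
    rw [Real.fourierInv_eq_fourier_neg] at hiv
    simpa [hv] using hiv
  have hflip : (innerₗ ℝ).flip = innerₗ ℝ := by
    apply LinearMap.ext; intro a; apply LinearMap.ext; intro b
    simpa using real_inner_comm a b
  have key := VectorFourier.integral_bilin_fourierIntegral_eq_flip
    (ContinuousLinearMap.mul ℂ ℂ) (Real.continuous_fourierChar)
    (by exact continuous_inner) g.integrable hFv_int (L := innerₗ ℝ) (μ := volume) (ν := volume)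
  rw [hflip] at key
  have keyG : ∫ ξ : ℝ, 𝓕 (g : ℝ → ℂ) ξ * 𝓕 v ξ = ∫ x : ℝ, (g : ℝ → ℂ) x * 𝓕 (𝓕 v) x := key
  have hsq : ∀ z : ℂ, z * (starRingEnd ℂ) z = ((‖z‖ ^ 2 : ℝ) : ℂ) := by
    intro z
    rw [Complex.mul_conj]
    norm_cast
    rw [Complex.normSq_eq_norm_sq]
  simp only [hinv] at keyG
  rw [hFv] at keyG
  simp only [hsq] at keyG
  have h2 := integral_ofReal (𝕜 := ℂ) (μ := (volume : Measure ℝ))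
    (f := fun ξ : ℝ => ‖𝓕 (g : ℝ → ℂ) ξ‖ ^ 2)
  have h3 := integral_ofReal (𝕜 := ℂ) (μ := (volume : Measure ℝ))
    (f := fun x : ℝ => ‖g x‖ ^ 2)
  have h4 := h2.symm.trans (keyG.trans h3)
  exact_mod_cast h4



/-- The Schrödinger kernel `K_t(x) = (4πit)^{-1/2} e^{ix²/(4t)}`. -/
noncomputable def schrodingerKernel (t x : ℝ) : ℂ :=
  (4 * Real.pi * I * (t : ℂ)) ^ (-(1 / 2 : ℂ)) * Complex.exp (I * (x : ℂ) ^ 2 / (4 * (t : ℂ)))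

/-- The Schrödinger evolution of the data `u₀`. -/
noncomputable def schrodingerEvolution (u₀ : ℝ → ℂ) (t x : ℝ) : ℂ :=
  ∫ y : ℝ, schrodingerKernel t (x - y) * u₀ y

/-- Conservation of `‖Lu(t)‖_{L²}` under the linear Schrödinger flow:
`‖x u(t) + 2it ∂ₓ u(t)‖_{L²} = ‖x u₀‖_{L²}` for all `t > 0`, for Schwartz data. -/
theorem Lu_L2_conserved (u₀ : SchwartzMap ℝ ℂ) (t : ℝ) (ht : t ≠ 0) :
    (∫ x : ℝ, ‖(x : ℂ) * schrodingerEvolution (fun y => u₀ y) t x +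
        2 * I * (t : ℂ) * deriv (fun y : ℝ => schrodingerEvolution (fun z => u₀ z) t y) x‖ ^ 2) =
      ∫ x : ℝ, ‖(x : ℂ) * u₀ x‖ ^ 2 := by
  have htC : (t : ℂ) ≠ 0 := by exact_mod_cast ht
  have hπ : (Real.pi : ℝ) ≠ 0 := Real.pi_ne_zero
  have hπC : ((Real.pi : ℝ) : ℂ) ≠ 0 := by exact_mod_cast hπ
  set a : ℂ := I / (4 * (t:ℂ)) with ha_def
  have ha : a.re = 0 := by
    rw [ha_def]
    have h4 : (4 * (t:ℂ)) = ((4*t : ℝ) : ℂ) := by push_cast; ring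
    rw [h4, Complex.div_ofReal_re]
    simp
  set c : ℂ := (4 * Real.pi * I * (t : ℂ)) ^ (-(1 / 2 : ℂ)) with hc_def
  set φ : ℝ → ℂ := fun y => Complex.exp (a * (y:ℂ)^2) with hφ_def
  have hφ : Function.HasTemperateGrowth φ := chirp_temperate ha
  have hxtg : Function.HasTemperateGrowth (fun y : ℝ => (y:ℂ)) :=
    Complex.ofRealCLM.hasTemperateGrowth
  set h : SchwartzMap ℝ ℂ := SchwartzMap.bilinLeftCLM (ContinuousLinearMap.mul ℝ ℂ) hφ u₀
    with hh_def
  set g : SchwartzMap ℝ ℂ := SchwartzMap.bilinLeftCLM (ContinuousLinearMap.mul ℝ ℂ) hxtg h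
    with hg_def
  have hh_apply : ∀ y : ℝ, h y = u₀ y * φ y := fun y => rfl
  have hg_apply : ∀ y : ℝ, g y = h y * (y:ℂ) := fun y => rfl
  -- Step A : representation of the evolution via the Fourier transform of h
  have reprA : (fun x : ℝ => schrodingerEvolution (fun y => u₀ y) t x)
      = fun x : ℝ => c * Complex.exp (a * (x:ℂ)^2) * 𝓕 (h : ℝ → ℂ) (x / (4 * Real.pi * t)) := by
    funext x
    rw [Real.fourier_real_eq]
    unfold schrodingerEvolution
    rw [← integral_const_mul]
    congr 1
    funext y
    rw [schrodingerKernel, hh_apply, Circle.smul_def, Real.fourierChar_apply]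
    rw [← hc_def]
    have hexp : I * (((x - y : ℝ)) : ℂ)^2 / (4*(t:ℂ))
        = a*(x:ℂ)^2 + ((((2*Real.pi * -(y*(x/(4*Real.pi*t)))) : ℝ) : ℂ) * I + a*(y:ℂ)^2) := by
      rw [ha_def]
      have hr : 2*Real.pi * -(y*(x/(4*Real.pi*t))) = -(x*y)/(2*t) := by
        field_simp
        ring
      rw [hr]
      push_cast
      field_simp
      ring
    rw [hexp, Complex.exp_add, Complex.exp_add, hφ_def, smul_eq_mul]
    ring
  set w : ℝ → ℝ := fun x => x / (4 * Real.pi * t) with hw_def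
  have hg_int : Integrable (fun y : ℝ => y • (h : ℝ → ℂ) y) := by
    have he : (fun y : ℝ => y • (h : ℝ → ℂ) y) = fun y => (g : ℝ → ℂ) y := by
      funext y; rw [hg_apply y, real_smul]; ring
    rw [he]; exact g.integrable
  have hDF : ∀ x : ℝ, HasDerivAt (𝓕 (h : ℝ → ℂ))
      (𝓕 (fun y : ℝ => (-2 * ↑Real.pi * I * ↑y) • (h : ℝ → ℂ) y) (w x)) (w x) :=
    fun x => Real.hasDerivAt_fourier h.integrable hg_int (w x)
  have hFm : ∀ ξ : ℝ, 𝓕 (fun y : ℝ => (-2 * ↑Real.pi * I * ↑y) • (h : ℝ → ℂ) y) ξ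
      = (-2 * ↑Real.pi * I) * 𝓕 (g : ℝ → ℂ) ξ := by
    intro ξ
    rw [Real.fourier_real_eq, Real.fourier_real_eq, ← integral_const_mul]
    congr 1; funext y
    simp only [Circle.smul_def, smul_eq_mul, hg_apply y]
    ring
  have hU : ∀ x : ℝ, HasDerivAt
      (fun x : ℝ => c * Complex.exp (a * (x:ℂ)^2) * 𝓕 (h : ℝ → ℂ) (w x))
      (c * (2*a*x*Complex.exp (a*(x:ℂ)^2)) * 𝓕 (h : ℝ → ℂ) (w x)
        + c * Complex.exp (a*(x:ℂ)^2) * ((1/(4*Real.pi*t)) •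
            𝓕 (fun y : ℝ => (-2 * ↑Real.pi * I * ↑y) • (h : ℝ → ℂ) y) (w x))) x := by
    intro x
    have h1 : HasDerivAt (fun x : ℝ => c * Complex.exp (a * (x:ℂ)^2))
        (c * (2*a*x*Complex.exp (a*(x:ℂ)^2))) x := (chirp_hasDerivAt a x).const_mul c
    have h2 : HasDerivAt w (1/(4*Real.pi*t)) x := by
      simpa using (hasDerivAt_id x).div_const (4*Real.pi*t)
    have h3 : HasDerivAt (fun x : ℝ => 𝓕 (h : ℝ → ℂ) (w x))
        ((1/(4*Real.pi*t)) • 𝓕 (fun y : ℝ => (-2 * ↑Real.pi * I * ↑y) • (h : ℝ → ℂ) y) (w x)) x := by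
      simpa [Function.comp_def] using HasDerivAt.scomp x (hDF x) h2
    exact h1.mul h3
  have hLu : ∀ x : ℝ, (x : ℂ) * schrodingerEvolution (fun y => u₀ y) t x
      + 2 * I * (t:ℂ) * deriv (fun y : ℝ => schrodingerEvolution (fun z => u₀ z) t y) x
      = c * Complex.exp (a*(x:ℂ)^2) * 𝓕 (g : ℝ → ℂ) (w x) := by
    intro x
    have hrepr' : deriv (fun y : ℝ => schrodingerEvolution (fun z => u₀ z) t y) x
        = c * (2*a*x*Complex.exp (a*(x:ℂ)^2)) * 𝓕 (h : ℝ → ℂ) (w x)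
          + c * Complex.exp (a*(x:ℂ)^2) * ((1/(4*Real.pi*t)) •
              ((-2 * ↑Real.pi * I) * 𝓕 (g : ℝ → ℂ) (w x))) := by
      rw [show (fun y : ℝ => schrodingerEvolution (fun z => u₀ z) t y)
          = fun x : ℝ => c * Complex.exp (a * (x:ℂ)^2) * 𝓕 (h : ℝ → ℂ) (w x) from reprA]
      rw [(hU x).deriv, hFm]
    rw [hrepr', congrFun reprA x, real_smul, ha_def]
    simp only [hw_def]
    push_cast
    field_simp
    ring_nf
    simp only [Complex.I_sq]
    ring
  have hcnorm : ‖c‖^2 * |4*Real.pi*t| = 1 := by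
    have habs : ‖(4 * ↑Real.pi * I * (t:ℂ))‖ = 4*Real.pi*|t| := by
      rw [norm_mul, norm_mul, norm_mul, Complex.norm_I, Complex.norm_real, Complex.norm_real,
        Real.norm_eq_abs, Real.norm_eq_abs, abs_of_pos Real.pi_pos]
      norm_num
    have h1 : ‖c‖ = (4*Real.pi*|t|) ^ (-(1/2) : ℝ) := by
      rw [hc_def,
        show (-(1/2 : ℂ)) = ((-(1/2) : ℝ) : ℂ) by norm_num,
        Complex.norm_cpow_real, habs]
    have h2 : |4*Real.pi*t| = 4*Real.pi*|t| := by
      rw [abs_mul, abs_mul]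
      simp [abs_of_pos Real.pi_pos]
    have hpos : (0:ℝ) < 4*Real.pi*|t| := by
      have := Real.pi_pos
      have : |t| > 0 := abs_pos.mpr ht
      positivity
    rw [h1, h2, ← Real.rpow_natCast ((4*Real.pi*|t|) ^ (-(1/2):ℝ)) 2,
      ← Real.rpow_mul (le_of_lt hpos)]
    norm_num
    rw [Real.rpow_neg_one]
    field_simp
  calc (∫ x : ℝ, ‖(x : ℂ) * schrodingerEvolution (fun y => u₀ y) t x +
        2 * I * (t : ℂ) * deriv (fun y : ℝ => schrodingerEvolution (fun z => u₀ z) t y) x‖ ^ 2)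
      = ∫ x : ℝ, ‖c‖^2 * ‖𝓕 (g : ℝ → ℂ) (w x)‖^2 := by
        congr 1; funext x
        rw [hLu x, norm_mul, norm_mul, chirp_norm ha x, mul_one, mul_pow]
    _ = ‖c‖^2 * ∫ x : ℝ, ‖𝓕 (g : ℝ → ℂ) (w x)‖^2 := integral_const_mul _ _
    _ = ‖c‖^2 * (|4*Real.pi*t| • ∫ ξ : ℝ, ‖𝓕 (g : ℝ → ℂ) ξ‖^2) := by
        simp only [hw_def]
        rw [MeasureTheory.Measure.integral_comp_div
          (fun ξ : ℝ => ‖𝓕 (g : ℝ → ℂ) ξ‖^2) (4*Real.pi*t)]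
    _ = (‖c‖^2 * |4*Real.pi*t|) * ∫ x : ℝ, ‖g x‖^2 := by
        rw [fourier_plancherel g, smul_eq_mul]; ring
    _ = ∫ x : ℝ, ‖g x‖^2 := by rw [hcnorm, one_mul]
    _ = ∫ x : ℝ, ‖(x:ℂ) * u₀ x‖^2 := by
        congr 1; funext x
        rw [hg_apply, hh_apply, norm_mul, norm_mul, chirp_norm ha x, mul_one, norm_mul]
        ring
end
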